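/- Suppose rank(X) = n. Let θ ∈ ℝ^n and set I = I⁰(θ) and I^c = 𝕀 \ I. If ‖X_{I^c}^⊤ (X X^⊤)^{−1} X‖₁ ≤ 1/2, then θ solves the ℓ1 problem, i.e., ‖φ(θ)‖₁ ≤ ‖φ(θ')‖₁ for all θ' ∈ ℝ^n. -/

import Mathlib

open Matrix Finset

/-- The Gram matrix `X X^⊤` of the regressor matrix `X`. -/
noncomputable def gramX (n N : ℕ) (x : Fin N → Fin n → ℝ) :
    Matrix (Fin n) (Fin n) ℝ :=
  Matrix.of fun i j => ∑ t, x t i * x t j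

/-- If `rank X = n` and the induced 1-norm of
`X_{Iᶜ}^⊤ (X X^⊤)⁻¹ X` (rows indexed by `Iᶜ`, columns by `𝕀`), with
`I = I⁰(θ)`, is at most `1/2`, then `θ` solves the ℓ1 problem. -/
theorem stmt8 (n N : ℕ) (hn : 1 ≤ n) (hN : 1 ≤ N)
    (x : Fin N → Fin n → ℝ) (y : Fin N → ℝ)
    (hrank : (Matrix.of fun i t => x t i : Matrix (Fin n) (Fin N) ℝ).rank = n)
    (θ : Fin n → ℝ)
    (hnorm : ∀ c : Fin N,
      ∑ s ∈ (univ.filter (fun t => x t ⬝ᵥ θ = y t))ᶜ,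
        |x s ⬝ᵥ ((gramX n N x)⁻¹ *ᵥ x c)| ≤ 1 / 2) :
    ∀ θ' : Fin n → ℝ, ∑ t, |y t - x t ⬝ᵥ θ| ≤ ∑ t, |y t - x t ⬝ᵥ θ'| := by
  classical
  intro θ'
  set X : Matrix (Fin n) (Fin N) ℝ := Matrix.of fun i t => x t i with hX
  set G := gramX n N x with hGdef
  have hGX : G = X * Xᵀ := by
    ext i j
    simp [hGdef, gramX, Matrix.mul_apply, hX, mul_comm]
  have hGrank : G.rank = n := by
    rw [hGX, X.rank_self_mul_transpose, hrank]
  have hunit : IsUnit G := by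
    rw [← Matrix.mulVec_surjective_iff_isUnit]
    have hr : LinearMap.range G.mulVecLin = ⊤ := by
      apply Submodule.eq_top_of_finrank_eq
      rw [show Module.finrank ℝ (LinearMap.range G.mulVecLin) = G.rank from rfl, hGrank]
      simp
    intro v
    have : v ∈ LinearMap.range G.mulVecLin := hr ▸ Submodule.mem_top
    obtain ⟨w, hw⟩ := this
    exact ⟨w, hw⟩
  have hinv : G⁻¹ * G = 1 :=
    Matrix.nonsing_inv_mul G ((Matrix.isUnit_iff_isUnit_det G).mp hunit)
  set δ : Fin n → ℝ := fun i => θ' i - θ i with hδdef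
  set u : Fin N → ℝ := fun t => x t ⬝ᵥ δ with hudef
  have hδ : δ = G⁻¹ *ᵥ (G *ᵥ δ) := by
    rw [Matrix.mulVec_mulVec, hinv, Matrix.one_mulVec]
  have hGδ : G *ᵥ δ = ∑ t, u t • x t := by
    funext i
    simp only [Matrix.mulVec, hGdef, gramX, Matrix.of_apply, dotProduct,
      Finset.sum_apply, Pi.smul_apply, smul_eq_mul, hudef, Finset.sum_mul]
    rw [Finset.sum_comm]
    congr 1; funext t; congr 1; funext j; ring
  have hkey : ∀ s, x s ⬝ᵥ δ = ∑ t, u t * (x s ⬝ᵥ (G⁻¹ *ᵥ x t)) := by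
    intro s
    conv_lhs => rw [hδ, hGδ]
    rw [show G⁻¹ *ᵥ (∑ t, u t • x t) = ∑ t, u t • (G⁻¹ *ᵥ x t) by
      simp only [← Matrix.mulVecLin_apply, map_sum, LinearMap.map_smul]]
    simp only [dotProduct, Finset.sum_apply, Pi.smul_apply, smul_eq_mul,
      Finset.mul_sum]
    rw [Finset.sum_comm]
    congr 1; funext t; congr 1; funext j; ring
  set I : Finset (Fin N) := univ.filter (fun t => x t ⬝ᵥ θ = y t) with hI
  set φ : Fin N → ℝ := fun t => y t - x t ⬝ᵥ θ with hφ
  have hφ0 : ∀ t ∈ I, φ t = 0 := by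
    intro t ht
    simp only [hI, mem_filter] at ht
    simp [hφ, ht.2]
  -- key bound
  have h1 : ∑ s ∈ Iᶜ, |u s| ≤ (1/2) * ∑ t, |u t| := by
    calc ∑ s ∈ Iᶜ, |u s| = ∑ s ∈ Iᶜ, |∑ t, u t * (x s ⬝ᵥ (G⁻¹ *ᵥ x t))| := by
          apply Finset.sum_congr rfl; intro s _
          rw [show u s = ∑ t, u t * (x s ⬝ᵥ (G⁻¹ *ᵥ x t)) from hkey s]
      _ ≤ ∑ s ∈ Iᶜ, ∑ t, |u t| * |x s ⬝ᵥ (G⁻¹ *ᵥ x t)| := by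
          apply Finset.sum_le_sum; intro s _
          refine (Finset.abs_sum_le_sum_abs _ _).trans ?_
          apply le_of_eq; apply Finset.sum_congr rfl; intro t _; exact abs_mul _ _
      _ = ∑ t, |u t| * ∑ s ∈ Iᶜ, |x s ⬝ᵥ (G⁻¹ *ᵥ x t)| := by
          rw [Finset.sum_comm]; congr 1; funext t; rw [Finset.mul_sum]
      _ ≤ ∑ t, |u t| * (1/2) := by
          apply Finset.sum_le_sum; intro t _
          exact mul_le_mul_of_nonneg_left (hnorm t) (abs_nonneg _)
      _ = (1/2) * ∑ t, |u t| := by rw [Finset.mul_sum]; congr 1; funext t; ring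
  have hsplitu : ∑ t, |u t| = ∑ t ∈ I, |u t| + ∑ t ∈ Iᶜ, |u t| :=
    (Finset.sum_add_sum_compl I _).symm
  have h2 : ∑ s ∈ Iᶜ, |u s| ≤ ∑ t ∈ I, |u t| := by
    rw [hsplitu] at h1; linarith
  have heq : ∀ t, y t - x t ⬝ᵥ θ' = φ t - u t := by
    intro t
    simp only [hφ, hudef, hδdef]
    rw [show (fun i => θ' i - θ i) = θ' - θ from rfl, dotProduct_sub]
    ring
  have hgoal : ∑ t, |y t - x t ⬝ᵥ θ'| = ∑ t, |φ t - u t| := by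
    apply Finset.sum_congr rfl; intro t _; rw [heq t]
  rw [hgoal]
  have hLHS : ∑ t, |φ t| = ∑ t ∈ Iᶜ, |φ t| := by
    rw [← Finset.sum_add_sum_compl I (fun t => |φ t|)]
    rw [Finset.sum_congr rfl (fun t ht => by rw [hφ0 t ht, abs_zero])]
    simp
  have hA : ∑ t ∈ I, |φ t - u t| = ∑ t ∈ I, |u t| := by
    apply Finset.sum_congr rfl; intro t ht; rw [hφ0 t ht, zero_sub, abs_neg]
  have hB : ∑ t ∈ Iᶜ, (|φ t| - |u t|) ≤ ∑ t ∈ Iᶜ, |φ t - u t| := by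
    apply Finset.sum_le_sum; intro t _; exact abs_sub_abs_le_abs_sub _ _
  have hsplit2 : ∑ t, |φ t - u t| = ∑ t ∈ I, |φ t - u t| + ∑ t ∈ Iᶜ, |φ t - u t| :=
    (Finset.sum_add_sum_compl I _).symm
  have hBsum : ∑ t ∈ Iᶜ, (|φ t| - |u t|) = ∑ t ∈ Iᶜ, |φ t| - ∑ t ∈ Iᶜ, |u t| :=
    Finset.sum_sub_distrib _ _
  show ∑ t, |φ t| ≤ ∑ t, |φ t - u t|
  rw [hsplit2, hA, hLHS]
  rw [hBsum] at hB
  linarith
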